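/- arXiv:2407.19979 — 2 statements merged into one kernel-verified Lean document; each statement's English description precedes it below -/
import Mathlib

section
/- (MinHash collision probability equals Jaccard similarity, the property of MinHash on which the encoding is based.) Let Ω = Fin m be a finite linearly ordered universe and let A, B ⊆ Ω be finite sets with A nonempty and B nonempty. If π is a permutation of Ω chosen uniformly at random, then the probability that the minimum of the image π(A) equals the minimum of the image π(B) is exactly the Jaccard similarity of A and B: Pr_π[ min π(A) = min π(B) ] = |A ∩ B| / |A ∪ B|. -/
open Finset

namespace MinHashAux

variable {m : ℕ}

noncomputable def argmin (U : Finset (Fin m)) (hU : U.Nonempty) (π : Equiv.Perm (Fin m)) :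
    Fin m :=
  π.symm ((U.image π).min' (hU.image π))

lemma argmin_mem (U : Finset (Fin m)) (hU : U.Nonempty) (π : Equiv.Perm (Fin m)) :
    argmin U hU π ∈ U := by
  have h := (U.image π).min'_mem (hU.image π)
  rw [Finset.mem_image] at h
  obtain ⟨a, ha, hπa⟩ := h
  simpa [argmin, ← hπa] using ha

lemma apply_argmin (U : Finset (Fin m)) (hU : U.Nonempty) (π : Equiv.Perm (Fin m)) :
    π (argmin U hU π) = (U.image π).min' (hU.image π) := by
  simp [argmin]

lemma min_eq_iff (A B : Finset (Fin m)) (hA : A.Nonempty) (hB : B.Nonempty)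
    (π : Equiv.Perm (Fin m)) :
    (A.image π).min' (hA.image π) = (B.image π).min' (hB.image π) ↔
      argmin (A ∪ B) (hA.mono Finset.subset_union_left) π ∈ A ∩ B := by
  set hU : (A ∪ B).Nonempty := hA.mono Finset.subset_union_left
  have himg : (A ∪ B).image π = A.image π ∪ B.image π := Finset.image_union _ _
  have hle : ∀ (C : Finset (Fin m)) (hC : C.Nonempty), C ⊆ A ∪ B →
      ((A ∪ B).image π).min' (hU.image π) ≤ (C.image π).min' (hC.image π) := by
    intro C hC hCU
    apply Finset.min'_le
    have := (C.image π).min'_mem (hC.image π)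
    exact Finset.image_subset_image hCU this
  constructor
  · intro h
    have hmin : ((A ∪ B).image π).min' (hU.image π) = (A.image π).min' (hA.image π) := by
      apply le_antisymm (hle A hA Finset.subset_union_left)
      apply Finset.le_min'
      intro y hy
      rw [himg, Finset.mem_union] at hy
      rcases hy with hy | hy
      · exact Finset.min'_le _ _ hy
      · rw [h]; exact Finset.min'_le _ _ hy
    rw [Finset.mem_inter]
    constructor
    · have hma := (A.image π).min'_mem (hA.image π)
      rw [Finset.mem_image] at hma
      obtain ⟨a, ha, hπa⟩ := hma
      have : argmin (A ∪ B) hU π = a := by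
        simp [argmin, hmin, ← hπa]
      rw [this]; exact ha
    · have hmb := (B.image π).min'_mem (hB.image π)
      rw [Finset.mem_image] at hmb
      obtain ⟨b, hb, hπb⟩ := hmb
      have : argmin (A ∪ B) hU π = b := by
        simp [argmin, hmin, h, ← hπb]
      rw [this]; exact hb
  · intro h
    rw [Finset.mem_inter] at h
    have key : ∀ (C : Finset (Fin m)) (hC : C.Nonempty), C ⊆ A ∪ B →
        argmin (A ∪ B) hU π ∈ C →
        (C.image π).min' (hC.image π) = ((A ∪ B).image π).min' (hU.image π) := by
      intro C hC hCU hx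
      apply le_antisymm
      · apply Finset.min'_le
        rw [← apply_argmin (A ∪ B) hU π]
        exact Finset.mem_image_of_mem _ hx
      · exact hle C hC hCU
    rw [key A hA Finset.subset_union_left h.1,
      key B hB Finset.subset_union_right h.2]

lemma image_swap (U : Finset (Fin m)) {x y : Fin m} (hx : x ∈ U) (hy : y ∈ U) :
    U.image (Equiv.swap x y) = U := by
  apply Finset.eq_of_subset_of_card_le
  · intro z hz
    rw [Finset.mem_image] at hz
    obtain ⟨a, ha, rfl⟩ := hz
    rcases eq_or_ne a x with rfl | hax
    · simpa [Equiv.swap_apply_left] using hy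
    rcases eq_or_ne a y with rfl | hay
    · simpa [Equiv.swap_apply_right] using hx
    · rwa [Equiv.swap_apply_of_ne_of_ne hax hay]
  · rw [Finset.card_image_of_injective _ (Equiv.injective _)]

lemma argmin_mul_swap (U : Finset (Fin m)) (hU : U.Nonempty) (π : Equiv.Perm (Fin m))
    {x y : Fin m} (hx : x ∈ U) (hy : y ∈ U) :
    argmin U hU (π * Equiv.swap x y) = Equiv.swap x y (argmin U hU π) := by
  have himg : U.image (π * Equiv.swap x y) = U.image π := by
    rw [show ⇑(π * Equiv.swap x y) = ⇑π ∘ ⇑(Equiv.swap x y) from rfl,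
      ← Finset.image_image, image_swap U hx hy]
  simp only [argmin]
  have : ((U.image (π * Equiv.swap x y)).min' ((hU.image _))) =
      ((U.image π).min' (hU.image π)) := by
    congr 1
  rw [this]
  rfl

lemma fiber_card_eq (U : Finset (Fin m)) (hU : U.Nonempty) {x y : Fin m}
    (hx : x ∈ U) (hy : y ∈ U) :
    (Finset.univ.filter (fun π : Equiv.Perm (Fin m) => argmin U hU π = x)).card =
    (Finset.univ.filter (fun π : Equiv.Perm (Fin m) => argmin U hU π = y)).card := by
  apply Finset.card_bij' (fun π _ => π * Equiv.swap x y) (fun π _ => π * Equiv.swap x y)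
  · intro π hπ
    rw [Finset.mem_filter] at hπ ⊢
    refine ⟨Finset.mem_univ _, ?_⟩
    rw [argmin_mul_swap U hU π hx hy, hπ.2, Equiv.swap_apply_left]
  · intro π hπ
    rw [Finset.mem_filter] at hπ ⊢
    refine ⟨Finset.mem_univ _, ?_⟩
    rw [argmin_mul_swap U hU π hx hy, hπ.2, Equiv.swap_apply_right]
  · intro π _
    rw [mul_assoc, Equiv.swap_mul_self, mul_one]
  · intro π _
    rw [mul_assoc, Equiv.swap_mul_self, mul_one]

end MinHashAux

/-- MinHash collision probability equals Jaccard similarity: for nonempty finite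
sets `A, B ⊆ Fin m` and a uniformly random permutation `π` of `Fin m`, the
probability that `min π(A) = min π(B)` equals `|A ∩ B| / |A ∪ B|`. -/
theorem minhash_collision_prob_eq_jaccard (m : ℕ) (A B : Finset (Fin m))
    (hA : A.Nonempty) (hB : B.Nonempty) :
    ((Finset.univ.filter (fun π : Equiv.Perm (Fin m) =>
        (A.image π).min' (hA.image π) = (B.image π).min' (hB.image π))).card : ℝ) /
      (Fintype.card (Equiv.Perm (Fin m)) : ℝ) =
    ((A ∩ B).card : ℝ) / ((A ∪ B).card : ℝ) := by
  classical
  set U := A ∪ B with hUdef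
  have hU : U.Nonempty := hA.mono Finset.subset_union_left
  obtain ⟨x₀, hx₀⟩ := id hU
  set N := (Finset.univ.filter
    (fun π : Equiv.Perm (Fin m) => MinHashAux.argmin U hU π = x₀)).card with hN
  have fibN : ∀ x ∈ U,
      (Finset.univ.filter (fun π : Equiv.Perm (Fin m) => MinHashAux.argmin U hU π = x)).card
        = N := fun x hx => MinHashAux.fiber_card_eq U hU hx hx₀
  have htot : Fintype.card (Equiv.Perm (Fin m)) = U.card * N := by
    rw [← Finset.card_univ]
    rw [Finset.card_eq_sum_card_fiberwise
      (f := MinHashAux.argmin U hU) (t := U)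
      (fun π _ => MinHashAux.argmin_mem U hU π)]
    rw [Finset.sum_congr rfl (fun x hx => fibN x hx), Finset.sum_const, smul_eq_mul]
  have hfilt : (Finset.univ.filter (fun π : Equiv.Perm (Fin m) =>
      (A.image π).min' (hA.image π) = (B.image π).min' (hB.image π))).card
      = (A ∩ B).card * N := by
    have heq : (Finset.univ.filter (fun π : Equiv.Perm (Fin m) =>
        (A.image π).min' (hA.image π) = (B.image π).min' (hB.image π)))
        = Finset.univ.filter (fun π => MinHashAux.argmin U hU π ∈ A ∩ B) := by
      apply Finset.filter_congr
      intro π _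
      exact MinHashAux.min_eq_iff A B hA hB π
    rw [heq]
    rw [Finset.card_eq_sum_card_fiberwise
      (s := Finset.univ.filter (fun π => MinHashAux.argmin U hU π ∈ A ∩ B))
      (f := MinHashAux.argmin U hU) (t := A ∩ B)
      (fun π hπ => Finset.mem_coe.mpr (Finset.mem_filter.mp (Finset.mem_coe.mp hπ)).2)]
    have step : ∀ x ∈ A ∩ B,
        ((Finset.univ.filter (fun π => MinHashAux.argmin U hU π ∈ A ∩ B)).filter
          (fun π => MinHashAux.argmin U hU π = x)).card = N := by
      intro x hx
      have hEq : (Finset.univ.filter (fun π => MinHashAux.argmin U hU π ∈ A ∩ B)).filter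
          (fun π => MinHashAux.argmin U hU π = x)
          = Finset.univ.filter (fun π : Equiv.Perm (Fin m) => MinHashAux.argmin U hU π = x) := by
        ext π
        simp only [Finset.mem_filter, Finset.mem_univ, true_and]
        constructor
        · exact fun h => h.2
        · exact fun h => ⟨h ▸ hx, h⟩
      rw [hEq]
      exact fibN x (Finset.inter_subset_union hx)
    rw [Finset.sum_congr rfl step, Finset.sum_const, smul_eq_mul]
  have hN0 : (N:ℝ) ≠ 0 := by
    have hcardpos : 0 < Fintype.card (Equiv.Perm (Fin m)) := Fintype.card_pos
    rw [htot] at hcardpos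
    have : N ≠ 0 := by
      intro h
      rw [h, mul_zero] at hcardpos
      exact lt_irrefl 0 hcardpos
    exact_mod_cast this
  rw [hfilt, htot]
  push_cast
  rw [mul_div_mul_right _ _ hN0]
end

section
/- (Unbiasedness of MinHash signatures of length P, underlying the claim that more permutations give more accurate signatures.) Let Ω = Fin m be a finite linearly ordered universe, let A, B ⊆ Ω be nonempty finite sets, and let π₁, …, π_P be P independent uniformly random permutations of Ω. Then the expected number of coordinates on which the length-P MinHash signatures of A and B agree equals P times the Jaccard similarity: E[ #{ i ≤ P : min π_i(A) = min π_i(B) } ] = P · |A ∩ B| / |A ∪ B|. -/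
open Finset

private lemma minhash_swap_image {m : ℕ} {S : Finset (Fin m)} {a b : Fin m}
    (ha : a ∈ S) (hb : b ∈ S) : S.image (Equiv.swap a b) = S := by
  apply Finset.eq_of_subset_of_card_le
  · intro x hx
    obtain ⟨y, hy, rfl⟩ := Finset.mem_image.mp hx
    rcases eq_or_ne y a with rfl | hya
    · simpa using hb
    rcases eq_or_ne y b with rfl | hyb
    · simpa using ha
    · rwa [Equiv.swap_apply_of_ne_of_ne hya hyb]
  · rw [Finset.card_image_of_injective _ (Equiv.injective _)]

private lemma minhash_min'_congr {α : Type*} [LinearOrder α] {s t : Finset α} (h : s = t)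
    (hs : s.Nonempty) : s.min' hs = t.min' (h ▸ hs) := by subst h; rfl

private lemma minhash_single (m : ℕ) (A B : Finset (Fin m)) (hA : A.Nonempty) (hB : B.Nonempty) :
    (Finset.univ.filter (fun σ : Equiv.Perm (Fin m) =>
        (A.image σ).min' (hA.image σ) = (B.image σ).min' (hB.image σ))).card * (A ∪ B).card
      = (A ∩ B).card * Fintype.card (Equiv.Perm (Fin m)) := by
  have hS : (A ∪ B).Nonempty := hA.mono Finset.subset_union_left
  set S := A ∪ B with hSdef
  set x : Equiv.Perm (Fin m) → Fin m :=
    fun σ => σ.symm ((S.image σ).min' (hS.image σ)) with hxdef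
  have hx_apply : ∀ σ : Equiv.Perm (Fin m), σ (x σ) = (S.image σ).min' (hS.image σ) :=
    fun σ => Equiv.apply_symm_apply σ _
  have hxS : ∀ σ, x σ ∈ S := by
    intro σ
    obtain ⟨y, hy, hyeq⟩ := Finset.mem_image.mp (Finset.min'_mem (S.image σ) (hS.image σ))
    have : x σ = y := (Equiv.symm_apply_eq σ).mpr hyeq.symm
    rwa [this]
  have key : ∀ (σ : Equiv.Perm (Fin m)) (C : Finset (Fin m)) (hC : C.Nonempty), C ⊆ S →
      ((C.image σ).min' (hC.image σ) = (S.image σ).min' (hS.image σ) ↔ x σ ∈ C) := by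
    intro σ C hC hCS
    constructor
    · intro h
      have hmem := Finset.min'_mem (C.image σ) (hC.image σ)
      rw [h] at hmem
      obtain ⟨y, hy, hyeq⟩ := Finset.mem_image.mp hmem
      have : x σ = y := (Equiv.symm_apply_eq σ).mpr hyeq.symm
      rwa [this]
    · intro h
      apply le_antisymm
      · exact Finset.min'_le _ _ (hx_apply σ ▸ Finset.mem_image_of_mem σ h)
      · exact Finset.min'_le _ _ (Finset.image_subset_image hCS (Finset.min'_mem _ _))
  have hchar : ∀ σ : Equiv.Perm (Fin m),
      ((A.image σ).min' (hA.image σ) = (B.image σ).min' (hB.image σ)) ↔ x σ ∈ A ∩ B := by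
    intro σ
    constructor
    · intro h
      have hAeq : (A.image σ).min' (hA.image σ) = (S.image σ).min' (hS.image σ) := by
        apply le_antisymm
        · have hmem := Finset.min'_mem (S.image σ) (hS.image σ)
          obtain ⟨y, hyS, hyeq⟩ := Finset.mem_image.mp hmem
          rw [hSdef] at hyS
          rcases Finset.mem_union.mp hyS with h1 | h1
          · exact Finset.min'_le _ _ (by rw [← hyeq]; exact Finset.mem_image_of_mem _ h1)
          · exact h.le.trans
              (Finset.min'_le _ _ (by rw [← hyeq]; exact Finset.mem_image_of_mem _ h1))
        · exact Finset.min'_le _ _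
            (Finset.image_subset_image Finset.subset_union_left (Finset.min'_mem _ _))
      have hBeq : (B.image σ).min' (hB.image σ) = (S.image σ).min' (hS.image σ) := by
        rw [← h]; exact hAeq
      exact Finset.mem_inter.mpr
        ⟨(key σ A hA Finset.subset_union_left).mp hAeq,
         (key σ B hB Finset.subset_union_right).mp hBeq⟩
    · intro h
      obtain ⟨h1, h2⟩ := Finset.mem_inter.mp h
      rw [(key σ A hA Finset.subset_union_left).mpr h1,
          (key σ B hB Finset.subset_union_right).mpr h2]
  -- fibers of x all have the same size
  have hxmul : ∀ (a b : Fin m), a ∈ S → b ∈ S → ∀ σ : Equiv.Perm (Fin m),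
      x (σ * Equiv.swap a b) = Equiv.swap a b (x σ) := by
    intro a b ha hb σ
    have himg : S.image ⇑(σ * Equiv.swap a b) = S.image σ := by
      rw [Equiv.Perm.coe_mul, ← Finset.image_image, minhash_swap_image ha hb]
    have hmin : (S.image ⇑(σ * Equiv.swap a b)).min' (hS.image _) =
        (S.image σ).min' (hS.image σ) := minhash_min'_congr himg _
    apply (σ * Equiv.swap a b).injective
    rw [hx_apply (σ * Equiv.swap a b), hmin, Equiv.Perm.mul_apply, Equiv.swap_apply_self]
    exact (hx_apply σ).symm
  have hfib : ∀ a ∈ S, ∀ b ∈ S,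
      (Finset.univ.filter fun σ => x σ = a).card
        = (Finset.univ.filter fun σ => x σ = b).card := by
    intro a ha b hb
    apply Finset.card_bij' (fun σ _ => σ * Equiv.swap a b) (fun σ _ => σ * Equiv.swap a b)
    · intro σ hσ
      rw [Finset.mem_filter] at hσ ⊢
      refine ⟨Finset.mem_univ _, ?_⟩
      rw [hxmul a b ha hb σ, hσ.2, Equiv.swap_apply_left]
    · intro σ hσ
      rw [Finset.mem_filter] at hσ ⊢
      refine ⟨Finset.mem_univ _, ?_⟩
      rw [hxmul a b ha hb σ, hσ.2, Equiv.swap_apply_right]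
    · intro σ _
      rw [mul_assoc, Equiv.swap_mul_self, mul_one]
    · intro σ _
      rw [mul_assoc, Equiv.swap_mul_self, mul_one]
  obtain ⟨a₀, ha₀⟩ := hS
  set c := (Finset.univ.filter fun σ => x σ = a₀).card with hc
  have hK : Fintype.card (Equiv.Perm (Fin m)) = S.card * c := by
    rw [← Finset.card_univ (α := Equiv.Perm (Fin m)),
      Finset.card_eq_sum_card_fiberwise (f := x) (t := S) (fun σ _ => hxS σ),
      Finset.sum_congr rfl (fun a ha => hfib a ha a₀ ha₀), Finset.sum_const, smul_eq_mul]
  have hN : (Finset.univ.filter (fun σ : Equiv.Perm (Fin m) =>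
        (A.image σ).min' (hA.image σ) = (B.image σ).min' (hB.image σ))).card
      = (A ∩ B).card * c := by
    have heq : (Finset.univ.filter (fun σ : Equiv.Perm (Fin m) =>
        (A.image σ).min' (hA.image σ) = (B.image σ).min' (hB.image σ)))
        = Finset.univ.filter (fun σ => x σ ∈ A ∩ B) :=
      Finset.filter_congr (fun σ _ => by rw [hchar σ])
    rw [heq, Finset.card_eq_sum_card_fiberwise (f := x) (s := Finset.univ.filter (fun σ => x σ ∈ A ∩ B)) (t := A ∩ B)
      (fun σ hσ => (Finset.mem_filter.mp hσ).2)]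
    have : ∀ a ∈ A ∩ B,
        ((Finset.univ.filter (fun σ => x σ ∈ A ∩ B)).filter (fun σ => x σ = a)).card = c := by
      intro a ha
      have : ((Finset.univ.filter (fun σ => x σ ∈ A ∩ B)).filter (fun σ => x σ = a))
          = Finset.univ.filter (fun σ => x σ = a) := by
        ext σ
        simp only [Finset.mem_filter, Finset.mem_univ, true_and]
        constructor
        · rintro ⟨-, h⟩; exact h
        · rintro h; exact ⟨h ▸ ha, h⟩
      rw [this]
      exact hfib a (Finset.inter_subset_union ha) a₀ ha₀
    rw [Finset.sum_congr rfl this, Finset.sum_const, smul_eq_mul]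
  rw [hN, hK]
  ring

/-- Unbiasedness of MinHash signatures of length `P`: for `P` independent uniformly
random permutations of `Fin m`, the expected number of coordinates on which the
length-`P` MinHash signatures of `A` and `B` agree equals `P` times the Jaccard
similarity `|A ∩ B| / |A ∪ B|`. The expectation over the uniform product
distribution is the average over all tuples of permutations. -/
theorem minhash_signature_unbiased (m P : ℕ) (A B : Finset (Fin m))
    (hA : A.Nonempty) (hB : B.Nonempty) :
    (∑ π : Fin P → Equiv.Perm (Fin m),
        ((Finset.univ.filter (fun i : Fin P =>
          (A.image (π i)).min' (hA.image (π i)) =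
            (B.image (π i)).min' (hB.image (π i)))).card : ℝ)) /
      (Fintype.card (Fin P → Equiv.Perm (Fin m)) : ℝ) =
    (P : ℝ) * (((A ∩ B).card : ℝ) / ((A ∪ B).card : ℝ)) := by
  set G := Equiv.Perm (Fin m) with hG
  set g : G → ℝ := fun σ =>
    if (A.image σ).min' (hA.image σ) = (B.image σ).min' (hB.image σ) then 1 else 0 with hg
  set K := Fintype.card G with hK
  set T : ℝ := ∑ σ : G, g σ with hT
  have hKpos : 0 < K := Fintype.card_pos
  -- T = N (the count)
  have hTN : T = ((Finset.univ.filter (fun σ : G =>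
      (A.image σ).min' (hA.image σ) = (B.image σ).min' (hB.image σ))).card : ℝ) := by
    rw [hT, hg]
    rw [Finset.card_filter]
    push_cast
    rfl
  have hTK : T / (K : ℝ) = ((A ∩ B).card : ℝ) / ((A ∪ B).card : ℝ) := by
    have hSpos : (0 : ℝ) < ((A ∪ B).card : ℝ) := by
      exact_mod_cast Finset.card_pos.mpr (hA.mono Finset.subset_union_left)
    have h := minhash_single m A B hA hB
    rw [div_eq_div_iff (by exact_mod_cast hKpos.ne') hSpos.ne', hTN]
    exact_mod_cast h
  rcases Nat.eq_zero_or_pos P with rfl | hP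
  · simp [Finset.filter_true_of_mem, Finset.card_eq_zero]
  -- rewrite the numerator
  have hnum : (∑ π : Fin P → G,
        ((Finset.univ.filter (fun i : Fin P =>
          (A.image (π i)).min' (hA.image (π i)) =
            (B.image (π i)).min' (hB.image (π i)))).card : ℝ))
      = (P : ℝ) * (K : ℝ) ^ (P - 1) * T := by
    have h1 : ∀ π : Fin P → G,
        ((Finset.univ.filter (fun i : Fin P =>
          (A.image (π i)).min' (hA.image (π i)) =
            (B.image (π i)).min' (hB.image (π i)))).card : ℝ)
        = ∑ i : Fin P, g (π i) := by
      intro π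
      rw [Finset.card_filter]
      push_cast
      rfl
    rw [Finset.sum_congr rfl (fun π _ => h1 π), Finset.sum_comm]
    have h2 : ∀ i : Fin P, ∑ π : Fin P → G, g (π i) = (K : ℝ) ^ (P - 1) * T := by
      intro i
      have e1 : ∑ π : Fin P → G, g (π i)
          = ∑ p : G × ({ j : Fin P // j ≠ i } → G), g p.1 :=
        Fintype.sum_equiv (Equiv.funSplitAt i G) _ _ (fun π => rfl)
      rw [e1, Fintype.sum_prod_type]
      simp only [Finset.sum_const, Finset.card_univ, nsmul_eq_mul]
      rw [← Finset.mul_sum]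
      have hcard : Fintype.card ({ j : Fin P // j ≠ i } → G) = K ^ (P - 1) := by
        rw [Fintype.card_fun]
        congr 1
        rw [Fintype.card_subtype_compl, Fintype.card_subtype_eq, Fintype.card_fin]
      rw [hcard, ← hT]
      push_cast
      ring
    rw [Finset.sum_congr rfl (fun i _ => h2 i), Finset.sum_const, Finset.card_univ,
      Fintype.card_fin, nsmul_eq_mul]
    ring
  have hden : (Fintype.card (Fin P → G) : ℝ) = (K : ℝ) ^ P := by
    rw [Fintype.card_fun, Fintype.card_fin]
    push_cast
    rfl
  rw [hnum, hden, ← hTK]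
  have hKR : (0 : ℝ) < (K : ℝ) := by exact_mod_cast hKpos
  have hpow : (K : ℝ) ^ P = (K : ℝ) ^ (P - 1) * K := by
    rw [← pow_succ, Nat.sub_add_cancel hP]
  rw [hpow]
  field_simp
end
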